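/- arXiv:2307.01867 — 5 statements merged into one kernel-verified Lean document; each statement's English description precedes it below -/
import Mathlib

section
/- If x(t) satisfies x'(t) = s*x*log(x_max/x) with 0 < x(t) < x_max, then for every n ≥ 1, the n-th derivative satisfies x^(n)(t) = s^n * x * Σ_{k=1}^{n} (-1)^{n-k} * S(n,k) * (log(x_max/x))^k, where S(n,k) denotes the Stirling number of the second kind. -/
/-- Stirling numbers of the second kind: number of partitions of an `n`-set
into `k` nonempty blocks, via the standard recurrence. -/
def stirlingSecond : ℕ → ℕ → ℕ
  | 0, 0 => 1
  | 0, _ + 1 => 0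
  | _ + 1, 0 => 0
  | n + 1, k + 1 => (k + 1) * stirlingSecond n (k + 1) + stirlingSecond n k

lemma stirling_zero_of_lt : ∀ n k : ℕ, n < k → stirlingSecond n k = 0 := by
  intro n
  induction n with
  | zero =>
    intro k hk
    cases k with
    | zero => omega
    | succ k => rfl
  | succ n ih =>
    intro k hk
    cases k with
    | zero => omega
    | succ k =>
      have h1 : n < k := by omega
      simp [stirlingSecond, ih _ h1, ih (k+1) (by omega)]

noncomputable def gompC (n k : ℕ) : ℝ := (-1 : ℝ) ^ (n - k) * (stirlingSecond n k : ℝ)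

lemma gompC_zero (n : ℕ) : gompC (n+1) 0 = 0 := by
  simp [gompC, stirlingSecond]

lemma gompC_of_lt (n k : ℕ) (h : n < k) : gompC n k = 0 := by
  simp [gompC, stirling_zero_of_lt n k h]

lemma gompC_rec (n k : ℕ) :
    gompC (n+1) (k+1) = gompC n k - (k+1 : ℝ) * gompC n (k+1) := by
  rcases lt_trichotomy k n with h | rfl | h
  · have h1 : n - k = (n - (k+1)) + 1 := by omega
    have h2 : n + 1 - (k+1) = n - k := by omega
    simp only [gompC, h2, h1, stirlingSecond]
    push_cast
    ring
  · simp only [gompC, Nat.sub_self, Nat.add_sub_cancel_left, stirlingSecond,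
      stirling_zero_of_lt k (k+1) (by omega)]
    have h3 : k + 1 - (k + 1) = 0 := by omega
    have h4 : k - (k + 1) = 0 := by omega
    simp [h3, h4]
  · simp [gompC_of_lt _ _ h, gompC_of_lt _ _ (by omega : n < k+1),
      gompC_of_lt _ _ (by omega : n+1 < k+1)]

lemma gomp_halg (n : ℕ) (v : ℝ) :
    ∑ k ∈ Finset.range (n+2), gompC n k * (v^(k+1) - (k : ℝ) * v^k)
      = ∑ k ∈ Finset.range (n+3), gompC (n+1) k * v^k := by
  rw [Finset.sum_range_succ' (fun k => gompC (n+1) k * v^k) (n+2)]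
  simp only [gompC_rec, gompC_zero, zero_mul, add_zero]
  simp only [mul_sub, sub_mul, Finset.sum_sub_distrib]
  congr 1
  rw [Finset.sum_range_succ' (fun k => gompC n k * ((k : ℝ) * v^k)) (n+1)]
  rw [Finset.sum_range_succ (fun k => ((k : ℝ)+1) * gompC n (k+1) * v^(k+1)) (n+1)]
  rw [gompC_of_lt n (n+2) (by omega)]
  push_cast
  simp only [Nat.cast_zero, zero_mul, mul_zero, add_zero]
  refine (Finset.sum_congr rfl fun k _ => ?_).symm
  push_cast
  ring

theorem gompertz_nth_derivative (s xmax : ℝ) (hs : 0 < s) (hxmax : 0 < xmax)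
    (x : ℝ → ℝ)
    (hode : ∀ t, HasDerivAt x (s * x t * Real.log (xmax / x t)) t)
    (hpos : ∀ t, 0 < x t) (hlt : ∀ t, x t < xmax) :
    ∀ n : ℕ, 1 ≤ n → ∀ t : ℝ,
      iteratedDeriv n x t =
        s ^ n * x t * ∑ k ∈ Finset.Icc 1 n,
          (-1 : ℝ) ^ (n - k) * (stirlingSecond n k : ℝ) *
            Real.log (xmax / x t) ^ k := by
  have hxne : ∀ t, x t ≠ 0 := fun t => (hpos t).ne'
  set u : ℝ → ℝ := fun t => Real.log (xmax / x t) with hu_def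
  have hulog : ∀ t, u t = Real.log xmax - Real.log (x t) := fun t =>
    Real.log_div hxmax.ne' (hxne t)
  have hu : ∀ t, HasDerivAt u (-(s * u t)) t := by
    intro t
    have h1 : HasDerivAt (fun t => Real.log (x t)) (s * x t * u t / x t) t :=
      (hode t).log (hxne t)
    have h2 : HasDerivAt (fun t => Real.log xmax - Real.log (x t))
        (0 - s * x t * u t / x t) t := (hasDerivAt_const t (Real.log xmax)).sub h1
    have heq : (fun t => Real.log xmax - Real.log (x t)) = u := by
      funext t; rw [hulog t]
    rw [heq] at h2
    convert h2 using 1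
    rw [zero_sub, neg_inj, eq_div_iff (hxne t)]
    ring
  have hprod : ∀ (k : ℕ) (t : ℝ), HasDerivAt (fun t => x t * u t ^ k)
      (s * x t * (u t ^ (k+1) - (k : ℝ) * u t ^ k)) t := by
    intro k t
    have hx' : HasDerivAt x (s * x t * u t) t := hode t
    have h := hx'.fun_mul ((hu t).fun_pow k)
    refine h.congr_deriv ?_
    symm
    cases k with
    | zero => simp
    | succ k =>
      simp only [Nat.add_sub_cancel]
      push_cast
      ring
  have hF : ∀ (n : ℕ) (t : ℝ), HasDerivAt
      (fun t => x t * ∑ k ∈ Finset.range (n+2), gompC n k * u t ^ k)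
      (s * (x t * ∑ k ∈ Finset.range (n+3), gompC (n+1) k * u t ^ k)) t := by
    intro n t
    have heq : (fun t => x t * ∑ k ∈ Finset.range (n+2), gompC n k * u t ^ k)
        = fun t => ∑ k ∈ Finset.range (n+2), gompC n k * (x t * u t ^ k) := by
      funext t; rw [Finset.mul_sum]; exact Finset.sum_congr rfl fun k _ => by ring
    rw [heq]
    have h := HasDerivAt.fun_sum (fun k (_ : k ∈ Finset.range (n+2)) =>
      ((hprod k t).const_mul (gompC n k)))
    refine h.congr_deriv ?_
    symm
    rw [← gomp_halg n (u t), Finset.mul_sum, Finset.mul_sum]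
    exact Finset.sum_congr rfl fun k _ => by ring
  have main : ∀ n : ℕ, iteratedDeriv (n+1) x =
      fun t => s^(n+1) * (x t * ∑ k ∈ Finset.range (n+3), gompC (n+1) k * u t ^ k) := by
    intro n
    induction n with
    | zero =>
      funext t
      rw [iteratedDeriv_one, (hode t).deriv]
      simp [Finset.sum_range_succ, gompC, stirlingSecond]
      rw [show Real.log (xmax / x t) = u t from rfl]
      ring
    | succ n ih =>
      funext t
      rw [iteratedDeriv_succ, ih, ((hF (n+1) t).const_mul (s^(n+1))).deriv]
      ring
  intro n hn t
  cases n with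
  | zero => omega
  | succ m =>
    have hsub : Finset.Icc 1 (m+1) ⊆ Finset.range (m+3) := by
      intro k hk; simp only [Finset.mem_Icc, Finset.mem_range] at *; omega
    have hvan : ∀ k ∈ Finset.range (m+3), k ∉ Finset.Icc 1 (m+1) →
        gompC (m+1) k * u t ^ k = 0 := by
      intro k hk hk'
      simp only [Finset.mem_range, Finset.mem_Icc, not_and, not_le] at hk hk'
      have : k = 0 ∨ k = m + 2 := by omega
      rcases this with rfl | rfl
      · rw [gompC_zero]; ring
      · rw [gompC_of_lt _ _ (by omega)]; ring
    have hut : Real.log (xmax / x t) = u t := rfl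
    calc iteratedDeriv (m+1) x t
        = s^(m+1) * (x t * ∑ k ∈ Finset.range (m+3), gompC (m+1) k * u t ^ k) :=
          congrFun (main m) t
      _ = s^(m+1) * (x t * ∑ k ∈ Finset.Icc 1 (m+1), gompC (m+1) k * u t ^ k) := by
          rw [Finset.sum_subset hsub hvan]
      _ = s ^ (m+1) * x t * ∑ k ∈ Finset.Icc 1 (m+1),
            (-1 : ℝ) ^ (m+1 - k) * (stirlingSecond (m+1) k : ℝ) *
              Real.log (xmax / x t) ^ k := by
          simp only [gompC, hut]; ring
end

section
/- The integral of the square of the second derivative of x(t) = exp(-exp(-t)), namely ∫_{-∞}^{∞} (exp(-exp(-t)) * exp(-t) * (exp(-t) - 1))^2 dt, equals 1/8. -/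
open MeasureTheory Set Real

lemma gomp_aux_integrable {a : ℝ} (ha : 0 < a) :
    IntegrableOn (fun u : ℝ => u ^ (a - 1) * Real.exp (-(2 * u))) (Ioi 0) := by
  have h := integrableOn_rpow_mul_exp_neg_mul_rpow (s := a - 1) (p := 1) (b := 2)
    (by linarith) one_pos two_pos
  simpa [Real.rpow_one, neg_mul] using h

lemma gomp_aux_val {a : ℝ} (ha : 0 < a) :
    ∫ u : ℝ in Ioi 0, u ^ (a - 1) * Real.exp (-(2 * u)) = (1 / 2 : ℝ) ^ a * Real.Gamma a :=
  Real.integral_rpow_mul_exp_neg_mul_Ioi ha two_pos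

lemma gomp_Ioi_val :
    ∫ u : ℝ in Ioi 0, Real.exp (-(2 * u)) * u * (u - 1) ^ 2 = 1 / 8 := by
  have h4 := gomp_aux_val (a := 4) (by norm_num)
  have h3 := gomp_aux_val (a := 3) (by norm_num)
  have h2 := gomp_aux_val (a := 2) (by norm_num)
  have i4 := gomp_aux_integrable (a := 4) (by norm_num)
  have i3 := gomp_aux_integrable (a := 3) (by norm_num)
  have i2 := gomp_aux_integrable (a := 2) (by norm_num)
  have key : ∫ u : ℝ in Ioi 0, Real.exp (-(2 * u)) * u * (u - 1) ^ 2 =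
      ∫ u : ℝ in Ioi 0, (u ^ ((4 : ℝ) - 1) * Real.exp (-(2 * u))
        - 2 * (u ^ ((3 : ℝ) - 1) * Real.exp (-(2 * u)))
        + u ^ ((2 : ℝ) - 1) * Real.exp (-(2 * u))) := by
    refine setIntegral_congr_fun measurableSet_Ioi (fun u hu => ?_)
    have hu' : (0 : ℝ) < u := hu
    rw [show ((4 : ℝ) - 1) = ((3 : ℕ) : ℝ) by norm_num,
      show ((3 : ℝ) - 1) = ((2 : ℕ) : ℝ) by norm_num,
      show ((2 : ℝ) - 1) = ((1 : ℕ) : ℝ) by norm_num,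
      Real.rpow_natCast, Real.rpow_natCast, Real.rpow_natCast]
    ring
  have i32 : IntegrableOn (fun u : ℝ => u ^ ((4 : ℝ) - 1) * Real.exp (-(2 * u))
      - 2 * (u ^ ((3 : ℝ) - 1) * Real.exp (-(2 * u)))) (Ioi 0) := i4.sub (i3.const_mul 2)
  rw [key, integral_add i32 i2, integral_sub i4 (i3.const_mul 2),
    MeasureTheory.integral_const_mul, h4, h3, h2]
  have g4 : Real.Gamma 4 = 6 := by
    rw [show (4 : ℝ) = (3 : ℕ) + 1 by norm_num, Real.Gamma_nat_eq_factorial]; norm_num [Nat.factorial]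
  have g3 : Real.Gamma 3 = 2 := by
    rw [show (3 : ℝ) = (2 : ℕ) + 1 by norm_num, Real.Gamma_nat_eq_factorial]; norm_num [Nat.factorial]
  have g2 : Real.Gamma 2 = 1 := by
    rw [show (2 : ℝ) = (1 : ℕ) + 1 by norm_num, Real.Gamma_nat_eq_factorial]; norm_num [Nat.factorial]
  rw [g4, g3, g2]
  norm_num

theorem gompertz_second_deriv_sq_integral :
    ∫ t : ℝ, (Real.exp (-Real.exp (-t)) * Real.exp (-t) * (Real.exp (-t) - 1)) ^ 2 =
      1 / 8 := by
  have himg : (fun u : ℝ => Real.exp (-u)) '' univ = Ioi 0 := by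
    ext y
    simp only [image_univ, mem_range, mem_Ioi]
    constructor
    · rintro ⟨u, rfl⟩; exact Real.exp_pos _
    · intro hy; exact ⟨-Real.log y, by rw [neg_neg, Real.exp_log hy]⟩
  have hderiv : ∀ x ∈ (univ : Set ℝ),
      HasDerivWithinAt (fun u : ℝ => Real.exp (-u)) (-Real.exp (-x)) univ x := by
    intro x _
    have h := (hasDerivAt_neg x).exp
    rw [mul_neg_one] at h
    exact h.hasDerivWithinAt
  have hinj : InjOn (fun u : ℝ => Real.exp (-u)) univ := by
    intro a _ b _ hab
    have := Real.exp_injective hab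
    linarith [this]
  have := integral_image_eq_integral_abs_deriv_smul (f := fun u : ℝ => Real.exp (-u))
    (f' := fun x : ℝ => -Real.exp (-x)) (g := fun u : ℝ => Real.exp (-(2 * u)) * u * (u - 1) ^ 2)
    MeasurableSet.univ hderiv hinj
  rw [himg, gomp_Ioi_val] at this
  rw [this, setIntegral_univ]
  congr 1
  ext x
  have hsq : Real.exp (-(2 * Real.exp (-x))) = Real.exp (-Real.exp (-x)) ^ 2 := by
    rw [← Real.exp_nat_mul]; ring_nf
  simp only [abs_neg, abs_of_pos (Real.exp_pos _), smul_eq_mul, hsq]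
  ring
end

section
/- The function ψ₂(t) = 2√2 * exp(-exp(-t)) * exp(-t) * (exp(-t) - 1) has L² norm equal to 1 and integral over ℝ equal to 0. -/
open MeasureTheory Set Filter Real Topology

noncomputable def Fg (t : ℝ) : ℝ :=
  2 * Real.sqrt 2 * (Real.exp (-t) * Real.exp (-Real.exp (-t)))

noncomputable def Hg (t : ℝ) : ℝ :=
  Real.exp (-Real.exp (-t)) ^ 2 *
    (4 * Real.exp (-t) ^ 3 - 2 * Real.exp (-t) ^ 2 + 2 * Real.exp (-t) + 1)

lemma hasDerivAt_u (t : ℝ) : HasDerivAt (fun t : ℝ => Real.exp (-t)) (-Real.exp (-t)) t := by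
  simpa using ((hasDerivAt_id t).neg).exp

lemma hasDerivAt_v (t : ℝ) :
    HasDerivAt (fun t : ℝ => Real.exp (-Real.exp (-t)))
      (Real.exp (-Real.exp (-t)) * Real.exp (-t)) t := by
  simpa using ((hasDerivAt_u t).neg).exp

lemma hasDerivAt_Fg (t : ℝ) :
    HasDerivAt Fg
      (2 * Real.sqrt 2 * (Real.exp (-Real.exp (-t)) * Real.exp (-t) * (Real.exp (-t) - 1))) t := by
  have h := ((hasDerivAt_u t).mul (hasDerivAt_v t)).const_mul (2 * Real.sqrt 2)
  refine h.congr_deriv ?_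
  ring

lemma hasDerivAt_Hg (t : ℝ) :
    HasDerivAt Hg
      ((2 * Real.sqrt 2 *
        (Real.exp (-Real.exp (-t)) * Real.exp (-t) * (Real.exp (-t) - 1))) ^ 2) t := by
  have hw := (hasDerivAt_v t).pow 2
  have hp : HasDerivAt
      (fun t : ℝ => 4 * Real.exp (-t) ^ 3 - 2 * Real.exp (-t) ^ 2 + 2 * Real.exp (-t) + 1)
      (4 * (3 * Real.exp (-t) ^ 2 * (-Real.exp (-t))) -
        2 * (2 * Real.exp (-t) ^ 1 * (-Real.exp (-t))) + 2 * (-Real.exp (-t))) t := by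
    have h3 := ((hasDerivAt_u t).pow 3).const_mul 4
    have h2 := ((hasDerivAt_u t).pow 2).const_mul 2
    have h1 := (hasDerivAt_u t).const_mul 2
    simpa using ((h3.sub h2).add h1).add_const 1
  have h := hw.mul hp
  refine h.congr_deriv ?_
  rw [mul_pow, mul_pow, Real.sq_sqrt (by norm_num : (0:ℝ) ≤ 2)]
  simp only [Pi.pow_apply, Nat.cast_ofNat, Nat.add_one_sub_one, pow_one]
  ring

lemma Fg_top : Tendsto Fg atTop (𝓝 0) := by
  have h1 : Tendsto (fun t : ℝ => Real.exp (-t)) atTop (𝓝 0) :=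
    Real.tendsto_exp_neg_atTop_nhds_zero
  have h2 : Tendsto (fun t : ℝ => Real.exp (-Real.exp (-t))) atTop (𝓝 1) := by
    have h1n : Tendsto (fun t : ℝ => -Real.exp (-t)) atTop (𝓝 0) := by simpa using h1.neg
    have := (Real.continuous_exp.tendsto 0).comp h1n
    simpa [Function.comp_def] using this
  have := (h1.mul h2).const_mul (2 * Real.sqrt 2)
  simp at this; exact this

lemma xexp_tendsto : Tendsto (fun x : ℝ => x * Real.exp (-x)) atTop (𝓝 0) := by
  simpa using Real.tendsto_pow_mul_exp_neg_atTop_nhds_zero 1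

lemma exp_neg_atBot : Tendsto (fun t : ℝ => Real.exp (-t)) atBot atTop :=
  Real.tendsto_exp_atTop.comp tendsto_neg_atBot_atTop

lemma Fg_bot : Tendsto Fg atBot (𝓝 0) := by
  have h := (xexp_tendsto.comp exp_neg_atBot).const_mul (2 * Real.sqrt 2)
  simp [Function.comp_def] at h; exact h

lemma Hg_top : Tendsto Hg atTop (𝓝 1) := by
  have hg : Tendsto
      (fun x : ℝ => Real.exp (-x) ^ 2 * (4 * x ^ 3 - 2 * x ^ 2 + 2 * x + 1)) (𝓝 0) (𝓝 1) := by
    have : Continuous fun x : ℝ => Real.exp (-x) ^ 2 * (4 * x ^ 3 - 2 * x ^ 2 + 2 * x + 1) := by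
      continuity
    have := this.tendsto 0
    simpa using this
  have h1 : Tendsto (fun t : ℝ => Real.exp (-t)) atTop (𝓝 0) :=
    Real.tendsto_exp_neg_atTop_nhds_zero
  exact hg.comp h1

lemma Hg_bot : Tendsto Hg atBot (𝓝 0) := by
  have e : ∀ n : ℕ, Tendsto (fun x : ℝ => x ^ n * Real.exp (-x)) atTop (𝓝 0) :=
    Real.tendsto_pow_mul_exp_neg_atTop_nhds_zero
  have e0 : Tendsto (fun x : ℝ => Real.exp (-x)) atTop (𝓝 0) :=
    Real.tendsto_exp_neg_atTop_nhds_zero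
  have hp : Tendsto (fun x : ℝ =>
      4 * (x ^ 3 * Real.exp (-x)) - 2 * (x ^ 2 * Real.exp (-x)) + 2 * (x * Real.exp (-x)) +
        Real.exp (-x)) atTop (𝓝 0) := by
    have h := ((((e 3).const_mul 4).sub ((e 2).const_mul 2)).add
      ((e 1).const_mul 2)).add e0
    simp only [pow_one] at h
    simpa using h
  have hg : Tendsto
      (fun x : ℝ => Real.exp (-x) ^ 2 * (4 * x ^ 3 - 2 * x ^ 2 + 2 * x + 1)) atTop (𝓝 0) := by
    have := hp.mul e0
    simp only [zero_mul] at this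
    exact this.congr (fun x => by ring)
  have := hg.comp exp_neg_atBot
  simp [Function.comp_def] at this; exact this

lemma integrableOn_Iic_comp_neg {f : ℝ → ℝ}
    (h : IntegrableOn (fun x => f (-x)) (Ioi (0:ℝ))) : IntegrableOn f (Iic (0:ℝ)) := by
  have h' : IntegrableOn (fun x => f (-x)) (Ici (0:ℝ)) :=
    (integrableOn_Ici_iff_integrableOn_Ioi (hb := enorm_ne_top)).mpr h
  rw [← Measure.map_neg_eq_self (volume : Measure ℝ)]
  have m : MeasurableEmbedding fun x : ℝ => -x :=
    (Homeomorph.neg ℝ).measurableEmbedding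
  rw [m.integrableOn_map_iff]
  simpa [Function.comp_def, neg_preimage, neg_Iic] using h'

theorem gompertz_wavelet_normalized
    (ψ : ℝ → ℝ)
    (hψ : ∀ t, ψ t = 2 * Real.sqrt 2 *
      (Real.exp (-Real.exp (-t)) * Real.exp (-t) * (Real.exp (-t) - 1))) :
    Real.sqrt (∫ t : ℝ, (ψ t) ^ 2) = 1 ∧ ∫ t : ℝ, ψ t = 0 := by
  have hd : ∀ t, HasDerivAt Fg (ψ t) t := fun t => by rw [hψ]; exact hasDerivAt_Fg t
  have hd2 : ∀ t, HasDerivAt Hg (ψ t ^ 2) t := fun t => by rw [hψ]; exact hasDerivAt_Hg t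
  -- reflected functions
  have hdr : ∀ x : ℝ, HasDerivAt (fun x => Fg (-x)) (ψ (-x) * (-1)) x := fun x =>
    (hd (-x)).comp x (hasDerivAt_neg x)
  have hdr2 : ∀ x : ℝ, HasDerivAt (fun x => Hg (-x)) (ψ (-x) ^ 2 * (-1)) x := fun x =>
    (hd2 (-x)).comp x (hasDerivAt_neg x)
  have hFr_top : Tendsto (fun x => Fg (-x)) atTop (𝓝 0) := Fg_bot.comp tendsto_neg_atTop_atBot
  have hHr_top : Tendsto (fun x => Hg (-x)) atTop (𝓝 0) := Hg_bot.comp tendsto_neg_atTop_atBot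
  -- sign facts
  have hψ_nonpos : ∀ t ∈ Ioi (0:ℝ), ψ t ≤ 0 := by
    intro t ht
    rw [hψ]
    have hb : Real.exp (-t) ≤ 1 := by
      rw [show (1:ℝ) = Real.exp 0 by simp]
      exact Real.exp_le_exp.mpr (by linarith [ht.out])
    have h1 : Real.exp (-Real.exp (-t)) * Real.exp (-t) * (Real.exp (-t) - 1) ≤ 0 :=
      mul_nonpos_of_nonneg_of_nonpos
        (mul_nonneg (Real.exp_pos _).le (Real.exp_pos _).le) (by linarith)
    exact mul_nonpos_of_nonneg_of_nonpos (by positivity) h1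
  have hψr_nonpos : ∀ x ∈ Ioi (0:ℝ), ψ (-x) * (-1) ≤ 0 := by
    intro x hx
    have : 0 ≤ ψ (-x) := by
      rw [hψ]
      have hb : (1:ℝ) ≤ Real.exp (- -x) := by
        rw [show (1:ℝ) = Real.exp 0 by simp]
        exact Real.exp_le_exp.mpr (by simpa using hx.out.le)
      have h1 : 0 ≤ Real.exp (-Real.exp (- -x)) * Real.exp (- -x) * (Real.exp (- -x) - 1) :=
        mul_nonneg (mul_nonneg (Real.exp_pos _).le (Real.exp_pos _).le) (by linarith)
      exact mul_nonneg (by positivity) h1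
    linarith
  have hψ2r_nonpos : ∀ x ∈ Ioi (0:ℝ), ψ (-x) ^ 2 * (-1) ≤ 0 := fun x _ => by
    nlinarith [sq_nonneg (ψ (-x))]
  -- Ioi integrals
  have hIoi_ψ : ∫ t in Ioi (0:ℝ), ψ t = 0 - Fg 0 :=
    integral_Ioi_of_hasDerivAt_of_nonpos' (fun x _ => hd x) hψ_nonpos Fg_top
  have hIoi_ψ_int : IntegrableOn ψ (Ioi (0:ℝ)) :=
    integrableOn_Ioi_deriv_of_nonpos' (fun x _ => hd x) hψ_nonpos Fg_top
  have hIoi_ψ2 : ∫ t in Ioi (0:ℝ), ψ t ^ 2 = 1 - Hg 0 :=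
    integral_Ioi_of_hasDerivAt_of_nonneg' (fun x _ => hd2 x) (fun x _ => sq_nonneg _) Hg_top
  have hIoi_ψ2_int : IntegrableOn (fun t => ψ t ^ 2) (Ioi (0:ℝ)) :=
    integrableOn_Ioi_deriv_of_nonneg' (fun x _ => hd2 x) (fun x _ => sq_nonneg _) Hg_top
  -- reflected Ioi integrals
  have hr_ψ : ∫ x in Ioi (0:ℝ), ψ (-x) * (-1) = 0 - Fg (-0) :=
    integral_Ioi_of_hasDerivAt_of_nonpos' (fun x _ => hdr x) hψr_nonpos hFr_top
  have hr_ψ_int : IntegrableOn (fun x => ψ (-x) * (-1)) (Ioi (0:ℝ)) :=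
    integrableOn_Ioi_deriv_of_nonpos' (fun x _ => hdr x) hψr_nonpos hFr_top
  have hr_ψ2 : ∫ x in Ioi (0:ℝ), ψ (-x) ^ 2 * (-1) = 0 - Hg (-0) :=
    integral_Ioi_of_hasDerivAt_of_nonpos' (fun x _ => hdr2 x) hψ2r_nonpos hHr_top
  have hr_ψ2_int : IntegrableOn (fun x => ψ (-x) ^ 2 * (-1)) (Ioi (0:ℝ)) :=
    integrableOn_Ioi_deriv_of_nonpos' (fun x _ => hdr2 x) hψ2r_nonpos hHr_top
  -- Iic integrability
  have hr_ψ_int' : IntegrableOn (fun x => ψ (-x)) (Ioi (0:ℝ)) := by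
    have he : (fun x => ψ (-x)) = fun x => -(ψ (-x) * (-1)) := by funext x; ring
    rw [he]; exact hr_ψ_int.neg
  have hr_ψ2_int' : IntegrableOn (fun x => ψ (-x) ^ 2) (Ioi (0:ℝ)) := by
    have he : (fun x => ψ (-x) ^ 2) = fun x => -(ψ (-x) ^ 2 * (-1)) := by funext x; ring
    rw [he]; exact hr_ψ2_int.neg
  have hIic_ψ_int : IntegrableOn ψ (Iic (0:ℝ)) := integrableOn_Iic_comp_neg hr_ψ_int'
  have hIic_ψ2_int : IntegrableOn (fun t => ψ t ^ 2) (Iic (0:ℝ)) :=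
    integrableOn_Iic_comp_neg hr_ψ2_int'
  -- Iic integral values
  have hIic_ψ : ∫ t in Iic (0:ℝ), ψ t = Fg 0 := by
    have h1 : ∫ x in Ioi (0:ℝ), ψ (-x) = Fg 0 := by
      have := integral_neg (μ := volume.restrict (Ioi (0:ℝ))) (fun x => ψ (-x))
      have h2 : ∫ x in Ioi (0:ℝ), ψ (-x) * (-1) = -∫ x in Ioi (0:ℝ), ψ (-x) := by
        rw [← this]; congr 1; funext x; ring
      rw [h2] at hr_ψ
      simp only [neg_zero, zero_sub] at hr_ψ
      linarith
    rw [← h1, integral_comp_neg_Ioi, neg_zero]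
  have hIic_ψ2 : ∫ t in Iic (0:ℝ), ψ t ^ 2 = Hg 0 := by
    have h1 : ∫ x in Ioi (0:ℝ), ψ (-x) ^ 2 = Hg 0 := by
      have := integral_neg (μ := volume.restrict (Ioi (0:ℝ))) (fun x => ψ (-x) ^ 2)
      have h2 : ∫ x in Ioi (0:ℝ), ψ (-x) ^ 2 * (-1) = -∫ x in Ioi (0:ℝ), ψ (-x) ^ 2 := by
        rw [← this]; congr 1; funext x; ring
      rw [h2] at hr_ψ2
      simp only [neg_zero, zero_sub] at hr_ψ2
      linarith
    rw [← h1, integral_comp_neg_Ioi (0:ℝ) (fun t => ψ t ^ 2), neg_zero]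
  -- combine
  have htot2 : ∫ t : ℝ, ψ t ^ 2 = 1 := by
    rw [← intervalIntegral.integral_Iic_add_Ioi hIic_ψ2_int hIoi_ψ2_int, hIic_ψ2, hIoi_ψ2]
    ring
  have htot : ∫ t : ℝ, ψ t = 0 := by
    rw [← intervalIntegral.integral_Iic_add_Ioi hIic_ψ_int hIoi_ψ_int, hIic_ψ, hIoi_ψ]
    ring
  exact ⟨by rw [htot2, Real.sqrt_one], htot⟩
end

section
/- For real a > 0, ∫_{0}^{∞} x² / sinh(a x) dx = (7 / (2a³)) * ζ(3), where ζ is the Riemann zeta function. -/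
open MeasureTheory Set Real

private lemma integral_x2_exp (c : ℝ) (hc : 0 < c) :
    ∫ x in Ioi (0:ℝ), x ^ 2 * Real.exp (-(c * x)) = 2 / c ^ 3 := by
  have h := integral_rpow_mul_exp_neg_mul_Ioi (show (0:ℝ) < 3 by norm_num) hc
  rw [show ((3:ℝ) - 1) = 2 from by norm_num] at h
  have hg : Real.Gamma 3 = 2 := by
    rw [show (3:ℝ) = (2:ℕ) + 1 from by norm_num, Real.Gamma_nat_eq_factorial]
    norm_num
  have heq : ∫ x in Ioi (0:ℝ), x ^ 2 * Real.exp (-(c * x))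
      = ∫ x in Ioi (0:ℝ), x ^ (2:ℝ) * Real.exp (-(c * x)) := by
    refine setIntegral_congr_fun measurableSet_Ioi (fun x hx => ?_)
    rw [← Real.rpow_natCast x 2]; norm_num
  rw [heq, h, hg]
  rw [div_rpow (by norm_num) hc.le, Real.one_rpow]
  rw [show (3:ℝ) = ((3:ℕ):ℝ) from by norm_num, Real.rpow_natCast]
  field_simp

private lemma integrable_x2_exp (c : ℝ) (hc : 0 < c) :
    IntegrableOn (fun x : ℝ => x ^ 2 * Real.exp (-(c * x))) (Ioi 0) := by
  have h := integrableOn_rpow_mul_exp_neg_mul_rpow (p := 1) (s := 2) (b := c)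
    (by norm_num) (by norm_num) hc
  refine h.congr_fun (fun x hx => ?_) measurableSet_Ioi
  beta_reduce
  rw [Real.rpow_one, ← Real.rpow_natCast x 2, neg_mul]
  norm_num

private lemma summable_aux : Summable (fun n : ℕ => 4 / (2 * (n:ℝ) + 1) ^ 3) := by
  have h : Summable (fun n : ℕ => 4 * (1 / ((n:ℝ) + 1) ^ 3)) := by
    apply Summable.mul_left
    have := Real.summable_one_div_nat_pow.mpr (show 1 < 3 by norm_num)
    exact_mod_cast (summable_nat_add_iff 1).mpr this
  refine h.of_nonneg_of_le (fun n => by positivity) (fun n => ?_)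
  rw [mul_one_div]
  gcongr
  linarith [Nat.cast_nonneg (α := ℝ) n]

private lemma core : ∫ x in Ioi (0:ℝ), x ^ 2 / Real.sinh x
    = 7 / 2 * ∑' k : ℕ, 1 / ((k : ℝ) + 1) ^ 3 := by
  set F : ℕ → ℝ → ℝ := fun n x => 2 * (x ^ 2 * Real.exp (-((2 * (n:ℝ) + 1) * x))) with hF
  have hint : ∀ n : ℕ, IntegrableOn (F n) (Ioi 0) := fun n =>
    ((integrable_x2_exp _ (by positivity)).const_mul 2 : _)
  have hval : ∀ n : ℕ, ∫ x in Ioi (0:ℝ), F n x = 4 / (2 * (n:ℝ) + 1) ^ 3 := by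
    intro n
    rw [hF]
    rw [integral_const_mul, integral_x2_exp _ (by positivity)]
    ring
  -- pointwise identity
  have hpt : ∀ x ∈ Ioi (0:ℝ), (∑' n : ℕ, F n x) = x ^ 2 / Real.sinh x := by
    intro x hx
    have hx0 : (0:ℝ) < x := hx
    have hr : Real.exp (-(2 * x)) < 1 := by
      rw [Real.exp_lt_one_iff]; linarith
    have hr0 : 0 ≤ Real.exp (-(2 * x)) := (Real.exp_pos _).le
    have hgeo : ∑' n : ℕ, Real.exp (-(2 * x)) ^ n = (1 - Real.exp (-(2 * x)))⁻¹ :=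
      tsum_geometric_of_lt_one hr0 hr
    have hterm : ∀ n : ℕ, F n x
        = (2 * x ^ 2 * Real.exp (-x)) * Real.exp (-(2 * x)) ^ n := by
      intro n
      rw [hF]
      show 2 * (x ^ 2 * Real.exp (-((2 * (n:ℝ) + 1) * x))) = _
      rw [show -((2 * (n:ℝ) + 1) * x) = -x + (n:ℝ) * (-(2 * x)) from by ring,
        Real.exp_add, Real.exp_nat_mul]
      ring
    rw [tsum_congr hterm, tsum_mul_left, hgeo]
    have hs : Real.sinh x = (Real.exp x - Real.exp (-x)) / 2 := Real.sinh_eq x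
    have hsp : 0 < Real.sinh x := Real.sinh_pos_iff.mpr hx0
    have h1 : 1 - Real.exp (-(2 * x)) = Real.exp (-x) * (Real.exp x - Real.exp (-x)) := by
      rw [mul_sub, ← Real.exp_add, ← Real.exp_add, show -x + x = 0 from by ring,
        Real.exp_zero, show -x + -x = -(2 * x) from by ring]
    rw [h1, hs]
    have he : Real.exp (-x) ≠ 0 := (Real.exp_pos _).ne'
    have hd : Real.exp x - Real.exp (-x) ≠ 0 := by
      have : 0 < Real.exp x - Real.exp (-x) := by
        have := hsp; rw [hs] at this; linarith
      exact this.ne'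
    rw [mul_inv, ← Real.exp_neg]
    field_simp
    rw [← Real.exp_add, show -x + x = 0 from by ring, Real.exp_zero]
  have hswap : ∫ x in Ioi (0:ℝ), x ^ 2 / Real.sinh x = ∑' n : ℕ, ∫ x in Ioi (0:ℝ), F n x := by
    rw [← setIntegral_congr_fun measurableSet_Ioi hpt]
    refine (integral_tsum_of_summable_integral_norm hint ?_).symm
    have : ∀ n : ℕ, ∫ x in Ioi (0:ℝ), ‖F n x‖ = 4 / (2 * (n:ℝ) + 1) ^ 3 := by
      intro n
      rw [← hval n]
      refine setIntegral_congr_fun measurableSet_Ioi (fun x hx => ?_)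
      have : 0 ≤ F n x := by
        rw [hF]; have : (0:ℝ) < x := hx; positivity
      exact Real.norm_of_nonneg this
    rw [funext this]
    exact summable_aux
  rw [hswap, tsum_congr hval]
  -- sum over odds
  set f : ℕ → ℝ := fun n => 1 / (n:ℝ) ^ 3 with hf
  have hsf : Summable f := Real.summable_one_div_nat_pow.mpr (by norm_num)
  have hse : Summable (fun k => f (2 * k)) := by
    have : (fun k : ℕ => f (2 * k)) = fun k : ℕ => (1/8) * f k := by
      funext k; rw [hf]; push_cast; by_cases hk : k = 0
      · simp [hk]
      · field_simp; ring
    rw [this]; exact hsf.mul_left _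
  have hso : Summable (fun k => f (2 * k + 1)) := by
    refine summable_aux.of_nonneg_of_le (fun n => by positivity) (fun n => ?_)
    rw [hf]; push_cast
    gcongr <;> norm_num
  have heven : ∑' k : ℕ, f (2 * k) = (1/8) * ∑' k, f k := by
    have hfun : (fun k : ℕ => f (2 * k)) = fun k : ℕ => (1/8) * f k := by
      funext k; rw [hf]; push_cast; by_cases hk : k = 0
      · simp [hk]
      · have : ((k:ℝ)) ≠ 0 := Nat.cast_ne_zero.mpr hk
        field_simp; ring
    rw [hfun, tsum_mul_left]
  have hodd : ∑' k : ℕ, f (2 * k + 1) = (7/8) * ∑' k, f k := by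
    have h := tsum_even_add_odd hse hso
    rw [heven] at h; linarith
  have hshift : ∑' k : ℕ, 1 / ((k : ℝ) + 1) ^ 3 = ∑' k, f k := by
    rw [Summable.tsum_eq_zero_add hsf, hf]
    push_cast
    norm_num
  rw [hshift]
  have : (fun n : ℕ => 4 / (2 * (n:ℝ) + 1) ^ 3) = fun n : ℕ => 4 * f (2 * n + 1) := by
    funext n; rw [hf]; push_cast; ring
  rw [this, tsum_mul_left, hodd]
  ring

theorem integral_sq_div_sinh (a : ℝ) (ha : 0 < a) :
    ∫ x in Set.Ioi (0 : ℝ), x ^ 2 / Real.sinh (a * x) =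
      7 / (2 * a ^ 3) * ∑' k : ℕ, 1 / ((k : ℝ) + 1) ^ 3 := by
  have ha' : a ≠ 0 := ha.ne'
  have h1 : ∫ x in Set.Ioi (0 : ℝ), x ^ 2 / Real.sinh (a * x)
      = ∫ x in Set.Ioi (0 : ℝ), (a⁻¹) ^ 2 * ((a * x) ^ 2 / Real.sinh (a * x)) := by
    refine integral_congr_ae (Filter.Eventually.of_forall fun x => ?_)
    show x ^ 2 / Real.sinh (a * x) = a⁻¹ ^ 2 * ((a * x) ^ 2 / Real.sinh (a * x))
    rw [mul_pow]
    field_simp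
  rw [h1, integral_const_mul,
    integral_comp_mul_left_Ioi (fun y => y ^ 2 / Real.sinh y) 0 ha, mul_zero, smul_eq_mul, core]
  set S := ∑' k : ℕ, 1 / ((k : ℝ) + 1) ^ 3 with hS
  field_simp
end

section
/- For the Gompertz wavelet ψ₂(t) = 2√2 * exp(-exp(-t)) * exp(-t) * (exp(-t) - 1), the admissibility constant C = 2π ∫_{-∞}^{∞} |ξ|^{-1} |ψ̂₂(ξ)|² dξ equals 56 ζ(3) / π², where ψ̂₂ is the Fourier transform of ψ₂ with convention ψ̂(ξ) = (1/√(2π)) ∫ ψ(t) e^{-iξt} dt. -/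
open MeasureTheory Set Complex Real Filter

-- substitution x = exp(-t)
lemma subst_exp_neg (G : ℝ → ℂ) :
    ∫ x in Ioi (0:ℝ), G x = ∫ t : ℝ, Real.exp (-t) • G (Real.exp (-t)) := by
  have himg : (Real.exp ∘ Neg.neg) '' univ = Ioi 0 := by
    rw [Set.image_comp, Set.image_univ_of_surjective neg_surjective, Set.image_univ,
      Real.range_exp]
  have hderiv : ∀ x ∈ (univ : Set ℝ),
      HasDerivWithinAt (Real.exp ∘ Neg.neg) (-Real.exp (-x)) univ x := by
    intro x _
    exact ((Real.hasDerivAt_exp (-x)).comp x (hasDerivAt_neg x)).hasDerivWithinAt.congr_deriv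
      (by ring)
  have hinj : (univ : Set ℝ).InjOn (Real.exp ∘ Neg.neg) :=
    Real.exp_injective.injOn.comp neg_injective.injOn (univ.mapsTo_univ _)
  rw [← himg, integral_image_eq_integral_abs_deriv_smul MeasurableSet.univ hderiv hinj G]
  rw [Measure.restrict_univ]
  congr 1
  ext t
  rw [abs_neg, abs_of_pos (Real.exp_pos _)]
  rfl

lemma cpow_exp_neg (t ξ : ℝ) :
    ((Real.exp (-t) : ℝ) : ℂ) ^ (I * ξ) = Complex.exp (-I * ξ * t) := by
  rw [Complex.ofReal_exp, Complex.cpow_def_of_ne_zero (Complex.exp_ne_zero _),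
    Complex.log_exp (by simp [Real.pi_pos]) (by simp [Real.pi_nonneg])]
  congr 1
  push_cast
  ring

lemma gamma_int (ξ : ℝ) :
    ∫ x in Ioi (0:ℝ), ((Real.exp (-x) : ℝ) : ℂ) * ((x:ℂ) - 1) * (x:ℂ) ^ (I * ξ)
      = I * ξ * Complex.Gamma (1 + I * ξ) := by
  have h1 : (0:ℝ) < (1 + I * (ξ:ℂ)).re := by simp
  have h2 : (0:ℝ) < (2 + I * (ξ:ℂ)).re := by norm_num
  have key : ∫ x in Ioi (0:ℝ), ((Real.exp (-x) : ℝ) : ℂ) * ((x:ℂ) - 1) * (x:ℂ) ^ (I * ξ)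
      = (∫ x in Ioi (0:ℝ), ((Real.exp (-x) : ℝ) : ℂ) * (x:ℂ) ^ ((2 + I * (ξ:ℂ)) - 1))
        - ∫ x in Ioi (0:ℝ), ((Real.exp (-x) : ℝ) : ℂ) * (x:ℂ) ^ ((1 + I * (ξ:ℂ)) - 1) := by
    rw [← integral_sub (Complex.GammaIntegral_convergent h2) (Complex.GammaIntegral_convergent h1)]
    refine setIntegral_congr_fun measurableSet_Ioi fun x hx => ?_
    have hx0 : (x:ℂ) ≠ 0 := Complex.ofReal_ne_zero.mpr (ne_of_gt hx)
    have e1 : ((2:ℂ) + I * ξ) - 1 = 1 + I * ξ := by ring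
    have e2 : ((1:ℂ) + I * ξ) - 1 = I * ξ := by ring
    rw [e1, e2, Complex.cpow_add _ _ hx0, Complex.cpow_one]
    ring
  have g1 : Complex.Gamma (1 + I * ξ) = ∫ x in Ioi (0:ℝ), ((Real.exp (-x) : ℝ) : ℂ) * (x:ℂ) ^ ((1 + I * (ξ:ℂ)) - 1) := by
    rw [Complex.Gamma_eq_integral h1]; rfl
  have g2 : Complex.Gamma (2 + I * ξ) = ∫ x in Ioi (0:ℝ), ((Real.exp (-x) : ℝ) : ℂ) * (x:ℂ) ^ ((2 + I * (ξ:ℂ)) - 1) := by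
    rw [Complex.Gamma_eq_integral h2]; rfl
  rw [key, ← g1, ← g2]
  have h3 : (2:ℂ) + I * ξ = (1 + I * ξ) + 1 := by ring
  rw [h3, Complex.Gamma_add_one _ (by intro h; simpa using congrArg Complex.re h)]
  ring

lemma norm_gamma_sq (ξ : ℝ) (hξ : ξ ≠ 0) :
    ‖Complex.Gamma (1 + I * ξ)‖ ^ 2 = Real.pi * ξ / Real.sinh (Real.pi * ξ) := by
  have hsinh : Real.sinh (Real.pi * ξ) ≠ 0 := by
    simp [Real.sinh_eq_zero, Real.pi_ne_zero, hξ]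
  have hconj : (starRingEnd ℂ) (Complex.Gamma (1 + I * ξ)) = Complex.Gamma (1 - I * ξ) := by
    rw [← Complex.Gamma_conj]
    congr 1
    simp [map_add, map_mul, Complex.conj_I, Complex.conj_ofReal]
    ring
  have hrefl := Complex.Gamma_mul_Gamma_one_sub (I * ξ)
  have hadd : Complex.Gamma (1 + I * ξ) = I * ξ * Complex.Gamma (I * ξ) := by
    have := Complex.Gamma_add_one (I * ξ) (by simp [hξ])
    rw [← this]; ring_nf
  have hsin : Complex.sin (↑Real.pi * (I * ξ)) = (Real.sinh (Real.pi * ξ) : ℂ) * I := by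
    have : (↑Real.pi * (I * (ξ:ℂ))) = ((Real.pi * ξ : ℝ) : ℂ) * I := by push_cast; ring
    rw [this, Complex.sin_mul_I, Complex.ofReal_sinh]
  have key : ((‖Complex.Gamma (1 + I * ξ)‖ ^ 2 : ℝ) : ℂ)
      = (↑(Real.pi * ξ / Real.sinh (Real.pi * ξ)) : ℂ) := by
    rw [Complex.sq_norm, ← Complex.mul_conj, hconj, hadd, mul_assoc, hrefl, hsin]
    have hI : (I:ℂ) ≠ 0 := I_ne_zero
    have hs : ((Real.sinh (Real.pi * ξ) : ℝ) : ℂ) ≠ 0 := by exact_mod_cast hsinh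
    push_cast
    field_simp
  exact_mod_cast key

lemma hS_summable : Summable (fun k : ℕ => 1 / ((k:ℝ) + 1) ^ 3) := by
  have := Real.summable_one_div_nat_pow.mpr (by norm_num : 1 < 3)
  have h2 := (summable_nat_add_iff 1).mpr this
  refine h2.congr fun k => ?_
  push_cast
  ring_nf

lemma hOdd_summable : Summable (fun k : ℕ => 1 / (2 * (k:ℝ) + 1) ^ 3) := by
  refine Summable.of_nonneg_of_le (fun k => by positivity) (fun k => ?_) hS_summable
  apply one_div_le_one_div_of_le
  · positivity
  · have : (0:ℝ) ≤ k := Nat.cast_nonneg k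
    gcongr <;> linarith

lemma odd_tsum : (∑' k : ℕ, 1 / (2 * (k:ℝ) + 1) ^ 3)
    = 7 / 8 * ∑' k : ℕ, 1 / ((k:ℝ) + 1) ^ 3 := by
  set f : ℕ → ℝ := fun k => 1 / ((k:ℝ) + 1) ^ 3 with hf
  have he1 : ∀ k : ℕ, f (2 * k) = 1 / (2 * (k:ℝ) + 1) ^ 3 := by
    intro k; simp only [hf]; push_cast; ring_nf
  have ho1 : ∀ k : ℕ, f (2 * k + 1) = 1 / 8 * f k := by
    intro k; simp only [hf]; push_cast; field_simp; ring
  have hE : Summable (fun k => f (2 * k)) := by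
    refine hOdd_summable.congr fun k => (he1 k).symm
  have hO : Summable (fun k => f (2 * k + 1)) := by
    refine (hS_summable.mul_left (1/8)).congr fun k => (ho1 k).symm
  have h := tsum_even_add_odd hE hO
  have hOval : (∑' k, f (2 * k + 1)) = 1 / 8 * ∑' k, f k := by
    rw [← tsum_mul_left]
    exact tsum_congr ho1
  have hEval : (∑' k : ℕ, 1 / (2 * (k:ℝ) + 1) ^ 3) = ∑' k, f (2 * k) :=
    (tsum_congr he1).symm
  rw [hEval]
  rw [hOval] at h
  linarith [h]

lemma expand_sinh {ξ : ℝ} (hξ : 0 < ξ) :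
    4 * ξ ^ 2 / Real.sinh (Real.pi * ξ) =
      ∑' k : ℕ, 8 * ξ ^ 2 * Real.exp (-((2 * (k:ℝ) + 1) * Real.pi * ξ)) := by
  set u : ℝ := Real.exp (-(Real.pi * ξ)) with hu
  have hu0 : 0 < u := Real.exp_pos _
  have hpi : 0 < Real.pi * ξ := by positivity
  have hu1 : u < 1 := Real.exp_lt_one_iff.mpr (by linarith)
  have hu2 : u ^ 2 < 1 := by nlinarith
  have hterm : ∀ k : ℕ, 8 * ξ ^ 2 * Real.exp (-((2 * (k:ℝ) + 1) * Real.pi * ξ))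
      = 8 * ξ ^ 2 * u * (u ^ 2) ^ k := by
    intro k
    have h1 : (-((2 * (k:ℝ) + 1) * Real.pi * ξ))
        = (-(Real.pi * ξ)) + (k:ℝ) * (2 * (-(Real.pi * ξ))) := by ring
    have h2 : u ^ 2 = Real.exp (2 * (-(Real.pi * ξ))) := by
      rw [hu, ← Real.exp_nat_mul]; norm_num
    rw [h1, Real.exp_add, h2, ← Real.exp_nat_mul]
    ring
  rw [tsum_congr hterm]
  have hgeo : ∑' k : ℕ, 8 * ξ ^ 2 * u * (u ^ 2) ^ k
      = 8 * ξ ^ 2 * u * (1 - u ^ 2)⁻¹ := by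
    rw [tsum_mul_left, tsum_geometric_of_lt_one (by positivity) hu2]
  rw [hgeo]
  have hsinh : Real.sinh (Real.pi * ξ) = (u⁻¹ - u) / 2 := by
    rw [Real.sinh_eq, hu, Real.exp_neg]
    simp
  rw [hsinh]
  have h1u : (1:ℝ) - u ^ 2 ≠ 0 := by nlinarith
  have husub : u⁻¹ - u ≠ 0 := by
    have : u⁻¹ - u = (1 - u ^ 2) / u := by field_simp
    rw [this]; positivity
  have hinv : u⁻¹ - u = (1 - u ^ 2) / u := by field_simp
  have h1upos : (0:ℝ) < 1 - u ^ 2 := by nlinarith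
  rw [hinv, ← div_eq_mul_inv, div_eq_div_iff (by positivity) (by positivity)]
  field_simp
  ring

lemma term_integrable {c : ℝ} (hc : 0 < c) :
    IntegrableOn (fun ξ : ℝ => 8 * ξ ^ 2 * Real.exp (-(c * ξ))) (Ioi 0) := by
  have h := (integrableOn_rpow_mul_exp_neg_mul_rpow (by norm_num : (-1:ℝ) < 2)
    (zero_lt_one : (0:ℝ) < 1) hc).const_mul 8
  have h2 : ∀ x : ℝ, x ^ (2:ℝ) = x ^ (2:ℕ) := fun x => by
    rw [← Real.rpow_natCast x 2]; norm_num
  refine h.congr (Filter.Eventually.of_forall fun x => ?_)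
  simp only [Real.rpow_one, h2]
  ring

lemma term_integral {c : ℝ} (hc : 0 < c) :
    ∫ ξ in Ioi (0:ℝ), 8 * ξ ^ 2 * Real.exp (-(c * ξ)) = 16 / c ^ 3 := by
  have key := integral_rpow_mul_exp_neg_mul_Ioi (by norm_num : (0:ℝ) < 3) hc
  have hg : Real.Gamma 3 = 2 := by
    rw [(by norm_num : (3:ℝ) = ((2:ℕ):ℝ) + 1), Real.Gamma_nat_eq_factorial]
    norm_num
  have heq : ∀ x ∈ Ioi (0:ℝ), x ^ ((3:ℝ) - 1) * Real.exp (-(c * x)) = x ^ 2 * Real.exp (-(c * x)) := by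
    intro x hx
    congr 1
    rw [(by norm_num : (3:ℝ) - 1 = ((2:ℕ):ℝ)), Real.rpow_natCast]
  rw [setIntegral_congr_fun measurableSet_Ioi heq] at key
  have : ∫ ξ in Ioi (0:ℝ), 8 * ξ ^ 2 * Real.exp (-(c * ξ))
      = 8 * ∫ ξ in Ioi (0:ℝ), ξ ^ 2 * Real.exp (-(c * ξ)) := by
    rw [← integral_const_mul]
    congr 1; ext x; ring
  rw [this, key, hg]
  rw [(by norm_num : (3:ℝ) = ((3:ℕ):ℝ)), Real.rpow_natCast]
  field_simp
  ring

lemma int_Ioi_val : ∫ ξ in Ioi (0:ℝ), 4 * ξ ^ 2 / Real.sinh (Real.pi * ξ)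
    = 14 / Real.pi ^ 3 * ∑' k : ℕ, 1 / ((k:ℝ) + 1) ^ 3 := by
  have hc : ∀ k : ℕ, (0:ℝ) < (2 * (k:ℝ) + 1) * Real.pi := fun k => by positivity
  set F : ℕ → ℝ → ℝ := fun k ξ => 8 * ξ ^ 2 * Real.exp (-((2 * (k:ℝ) + 1) * Real.pi * ξ)) with hF
  have hFc : ∀ k : ℕ, F k = fun ξ => 8 * ξ ^ 2 * Real.exp (-(((2 * (k:ℝ) + 1) * Real.pi) * ξ)) := by
    intro k; rfl
  have hint : ∀ k : ℕ, Integrable (F k) (volume.restrict (Ioi 0)) := by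
    intro k; rw [hFc k]; exact term_integrable (hc k)
  have hval : ∀ k : ℕ, ∫ ξ in Ioi (0:ℝ), F k ξ = 16 / Real.pi ^ 3 * (1 / (2 * (k:ℝ) + 1) ^ 3) := by
    intro k
    rw [hFc k, term_integral (hc k)]
    rw [mul_pow]
    field_simp
  have hnorm : ∀ k : ℕ, ∫ ξ in Ioi (0:ℝ), ‖F k ξ‖ = ∫ ξ in Ioi (0:ℝ), F k ξ := by
    intro k
    refine setIntegral_congr_fun measurableSet_Ioi fun ξ hξ => ?_
    simp only [hF]
    rw [Real.norm_eq_abs, _root_.abs_of_nonneg (by positivity)]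
  have hsum : Summable fun k : ℕ => ∫ ξ in Ioi (0:ℝ), ‖F k ξ‖ := by
    refine ((hOdd_summable.mul_left (16 / Real.pi ^ 3)).congr fun k => ?_)
    rw [hnorm k, hval k]
  have key := integral_tsum_of_summable_integral_norm hint hsum
  have hexp : ∫ ξ in Ioi (0:ℝ), 4 * ξ ^ 2 / Real.sinh (Real.pi * ξ)
      = ∫ ξ in Ioi (0:ℝ), ∑' k : ℕ, F k ξ := by
    refine setIntegral_congr_fun measurableSet_Ioi fun ξ hξ => ?_
    exact expand_sinh hξ
  rw [hexp, ← key]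
  rw [tsum_congr hval, tsum_mul_left, odd_tsum]
  ring

open Complex in
theorem gompertz_wavelet_admissibility
    (ψ : ℝ → ℝ)
    (hψ : ∀ t, ψ t = 2 * Real.sqrt 2 *
      (Real.exp (-Real.exp (-t)) * Real.exp (-t) * (Real.exp (-t) - 1)))
    (ψhat : ℝ → ℂ)
    (hψhat : ∀ ξ : ℝ, ψhat ξ =
      (1 / Real.sqrt (2 * Real.pi)) * ∫ t : ℝ, (ψ t : ℂ) * Complex.exp (-I * ξ * t)) :
    2 * Real.pi * ∫ ξ : ℝ, |ξ|⁻¹ * ‖ψhat ξ‖ ^ 2 =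
      56 * (∑' k : ℕ, 1 / ((k : ℝ) + 1) ^ 3) / Real.pi ^ 2 := by
  have key1 : ∀ ξ : ℝ, ψhat ξ = (1 / (Real.sqrt (2 * Real.pi) : ℂ)) *
      (((2 * Real.sqrt 2 : ℝ) : ℂ) * (I * ξ * Complex.Gamma (1 + I * ξ))) := by
    intro ξ
    rw [hψhat ξ]
    have heq : ∀ t : ℝ, Real.exp (-t) • (((2 * Real.sqrt 2 * Real.exp (-Real.exp (-t)) : ℝ) : ℂ)
          * (((Real.exp (-t) : ℝ) : ℂ) - 1) * ((Real.exp (-t) : ℝ) : ℂ) ^ (I * ξ))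
        = (ψ t : ℂ) * Complex.exp (-I * ξ * t) := by
      intro t
      rw [cpow_exp_neg t ξ, hψ t, Complex.real_smul]
      push_cast
      ring
    have hfi : ∫ t : ℝ, (ψ t : ℂ) * Complex.exp (-I * ξ * t)
        = ((2 * Real.sqrt 2 : ℝ) : ℂ) * (I * ξ * Complex.Gamma (1 + I * ξ)) := by
      calc ∫ t : ℝ, (ψ t : ℂ) * Complex.exp (-I * ξ * t)
          = ∫ t : ℝ, Real.exp (-t) • ((fun x : ℝ =>
              ((2 * Real.sqrt 2 * Real.exp (-x) : ℝ) : ℂ) * ((x:ℂ) - 1) * (x:ℂ) ^ (I * ξ))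
              (Real.exp (-t))) := by
            congr 1
            exact (funext heq).symm
        _ = ∫ x in Ioi (0:ℝ), ((2 * Real.sqrt 2 * Real.exp (-x) : ℝ) : ℂ) * ((x:ℂ) - 1)
              * (x:ℂ) ^ (I * ξ) := (subst_exp_neg (fun x : ℝ =>
              ((2 * Real.sqrt 2 * Real.exp (-x) : ℝ) : ℂ) * ((x:ℂ) - 1)
              * (x:ℂ) ^ (I * ξ))).symm
        _ = ∫ x in Ioi (0:ℝ), ((2 * Real.sqrt 2 : ℝ) : ℂ)
              * (((Real.exp (-x) : ℝ) : ℂ) * ((x:ℂ) - 1) * (x:ℂ) ^ (I * ξ)) := by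
            congr 1
            funext x
            push_cast
            ring
        _ = ((2 * Real.sqrt 2 : ℝ) : ℂ) * ∫ x in Ioi (0:ℝ),
              ((Real.exp (-x) : ℝ) : ℂ) * ((x:ℂ) - 1) * (x:ℂ) ^ (I * ξ) := integral_const_mul _ _
        _ = ((2 * Real.sqrt 2 : ℝ) : ℂ) * (I * ξ * Complex.Gamma (1 + I * ξ)) := by
            rw [gamma_int ξ]
    rw [hfi]
  have hnormpt : ∀ ξ : ℝ, |ξ|⁻¹ * ‖ψhat ξ‖ ^ 2
      = 4 * |ξ| ^ 2 / Real.sinh (Real.pi * |ξ|) := by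
    intro ξ
    have hn : ‖ψhat ξ‖ ^ 2 = 1 / (2 * Real.pi) * 8
        * (ξ ^ 2 * ‖Complex.Gamma (1 + I * ξ)‖ ^ 2) := by
      rw [key1 ξ]
      simp only [norm_mul, norm_div, norm_one, Complex.norm_I, Complex.norm_real,
        Real.norm_eq_abs]
      rw [_root_.abs_of_nonneg (Real.sqrt_nonneg (2 * Real.pi)),
        abs_two, _root_.abs_of_nonneg (Real.sqrt_nonneg 2)]
      rw [mul_pow, mul_pow, mul_pow, mul_pow, div_pow, one_pow,
        Real.sq_sqrt (by positivity : (0:ℝ) ≤ 2 * Real.pi)]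
      have h2 : Real.sqrt 2 ^ 2 = 2 := Real.sq_sqrt (by norm_num)
      rw [mul_pow, h2, _root_.sq_abs]
      ring
    by_cases hξ : ξ = 0
    · simp [hξ]
    · rw [hn, norm_gamma_sq ξ hξ]
      have hsinh : Real.sinh (Real.pi * ξ) ≠ 0 := by
        simp [Real.sinh_eq_zero, Real.pi_ne_zero, hξ]
      rcases lt_or_gt_of_ne hξ with hneg | hpos
      · rw [abs_of_neg hneg]
        have : Real.pi * -ξ = -(Real.pi * ξ) := by ring
        rw [this, Real.sinh_neg]
        field_simp
        ring
      · rw [abs_of_pos hpos]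
        field_simp
        ring
  rw [show (fun ξ : ℝ => |ξ|⁻¹ * ‖ψhat ξ‖ ^ 2)
      = fun ξ : ℝ => (fun y : ℝ => 4 * y ^ 2 / Real.sinh (Real.pi * y)) |ξ| from
      funext hnormpt]
  rw [integral_comp_abs (f := fun y : ℝ => 4 * y ^ 2 / Real.sinh (Real.pi * y))]
  rw [int_Ioi_val]
  have hπ : Real.pi ≠ 0 := Real.pi_ne_zero
  field_simp
  ring
end
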